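/- arXiv:2105.05051 — 3 statements merged into one kernel-verified Lean document; each statement's English description precedes it below -/
import Mathlib

section
/- Let μ_D be a probability measure compactly supported in (0,∞) and let t > t_c := (∫ λ^{-2} dμ_D(λ))^{-1}. Then there exists a unique c > 0 such that ∫ 1/(λ² + t²c) dμ_D(λ) = 1/t. -/
open MeasureTheory

lemma integrable_of_bdd (μ : Measure ℝ) [IsFiniteMeasure μ] {f : ℝ → ℝ} (hm : Measurable f)
    {C : ℝ} (hb : ∀ᵐ x ∂μ, ‖f x‖ ≤ C) : Integrable f μ :=
  ⟨hm.aestronglyMeasurable, HasFiniteIntegral.of_bounded hb⟩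

set_option maxHeartbeats 1000000 in
/-- For t > t_c := (∫ λ⁻² dμ_D)⁻¹ there is a unique c > 0 with
∫ 1/(λ² + t²c) dμ_D(λ) = 1/t. -/
theorem stmt1 (μD : Measure ℝ) [IsProbabilityMeasure μD] (a b : ℝ)
    (ha : 0 < a) (hsupp : μD (Set.Icc a b)ᶜ = 0) (t : ℝ)
    (ht : (∫ x, (x ^ 2)⁻¹ ∂μD)⁻¹ < t) :
    ∃! c : ℝ, 0 < c ∧ ∫ x, (x ^ 2 + t ^ 2 * c)⁻¹ ∂μD = 1 / t := by
  have hab : a ≤ b := by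
    by_contra h
    have he : Set.Icc a b = ∅ := Set.Icc_eq_empty h
    rw [he, Set.compl_empty] at hsupp
    have := measure_univ (μ := μD)
    rw [hsupp] at this
    simp at this
  have hb0 : 0 < b := lt_of_lt_of_le ha hab
  have hmem : ∀ᵐ x ∂μD, x ∈ Set.Icc a b := by
    rw [ae_iff]
    simpa [Set.compl_def] using hsupp
  -- integrability of (x^2 + t^2*c)⁻¹ for c ≥ 0
  have hint : ∀ c : ℝ, 0 ≤ c → Integrable (fun x => (x ^ 2 + t ^ 2 * c)⁻¹) μD := by
    intro c hc
    apply integrable_of_bdd μD (by fun_prop) (C := (a ^ 2)⁻¹)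
    filter_upwards [hmem] with x hx
    have h1 : a ^ 2 ≤ x ^ 2 + t ^ 2 * c := by nlinarith [hx.1, sq_nonneg t, mul_nonneg (sq_nonneg t) hc]
    rw [Real.norm_eq_abs, abs_of_nonneg (by positivity)]
    have ha2 : (0:ℝ) < a ^ 2 := by positivity
    exact inv_anti₀ ha2 h1
  have hint2 : Integrable (fun x => (x ^ 2)⁻¹) μD := by
    have := hint 0 le_rfl
    simpa using this
  set I := ∫ x, (x ^ 2)⁻¹ ∂μD with hIdef
  have hIge : (b ^ 2)⁻¹ ≤ I := by
    have : ∫ _x, (b ^ 2)⁻¹ ∂μD ≤ ∫ x, (x ^ 2)⁻¹ ∂μD := by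
      apply integral_mono_ae (integrable_const _) hint2
      filter_upwards [hmem] with x hx
      have hx2 : x ^ 2 ≤ b ^ 2 := by nlinarith [hx.1, hx.2]
      exact inv_anti₀ (pow_pos (lt_of_lt_of_le ha hx.1) 2) hx2
    simpa using this
  have hIpos : 0 < I := lt_of_lt_of_le (by positivity) hIge
  have ht0 : 0 < t := lt_trans (by positivity) ht
  have h1t : 1 / t < I := by
    rw [div_lt_iff₀ ht0]
    calc (1:ℝ) = I * I⁻¹ := (mul_inv_cancel₀ hIpos.ne').symm
    _ < I * t := by exact mul_lt_mul_of_pos_left ht hIpos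
  -- strict monotonicity
  have hstrict : ∀ c1 c2 : ℝ, 0 ≤ c1 → c1 < c2 →
      (∫ x, (x ^ 2 + t ^ 2 * c2)⁻¹ ∂μD) < ∫ x, (x ^ 2 + t ^ 2 * c1)⁻¹ ∂μD := by
    intro c1 c2 hc1 hc12
    have hc2 : 0 < c2 := lt_of_le_of_lt hc1 hc12
    set ε := t ^ 2 * (c2 - c1) / (b ^ 2 + t ^ 2 * c2) ^ 2 with hεdef
    have hsub : 0 < c2 - c1 := sub_pos.mpr hc12
    have hεpos : 0 < ε := by positivity
    have hi1 := hint c1 hc1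
    have hi2 := hint c2 hc2.le
    have key : ε ≤ ∫ x, ((x ^ 2 + t ^ 2 * c1)⁻¹ - (x ^ 2 + t ^ 2 * c2)⁻¹) ∂μD := by
      have : ∫ _x, ε ∂μD ≤ ∫ x, ((x ^ 2 + t ^ 2 * c1)⁻¹ - (x ^ 2 + t ^ 2 * c2)⁻¹) ∂μD := by
        apply integral_mono_ae (integrable_const _) (hi1.sub hi2)
        filter_upwards [hmem] with x hx
        have hxa := hx.1
        have hxb := hx.2
        have hd1 : 0 < x ^ 2 + t ^ 2 * c1 := by nlinarith [mul_nonneg (sq_nonneg t) hc1]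
        have hd2 : 0 < x ^ 2 + t ^ 2 * c2 := by nlinarith [mul_nonneg (sq_nonneg t) hc2.le]
        have hD : 0 < b ^ 2 + t ^ 2 * c2 := by positivity
        have heq : (x ^ 2 + t ^ 2 * c1)⁻¹ - (x ^ 2 + t ^ 2 * c2)⁻¹
            = t ^ 2 * (c2 - c1) / ((x ^ 2 + t ^ 2 * c1) * (x ^ 2 + t ^ 2 * c2)) := by
          field_simp
          ring
        simp only [Pi.sub_apply]
        rw [heq, hεdef]
        apply div_le_div_of_nonneg_left (by positivity) (by positivity)
        have hA : x ^ 2 + t ^ 2 * c1 ≤ b ^ 2 + t ^ 2 * c2 := by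
          nlinarith [mul_le_mul_of_nonneg_left hc12.le (sq_nonneg t)]
        have hB : x ^ 2 + t ^ 2 * c2 ≤ b ^ 2 + t ^ 2 * c2 := by nlinarith
        calc (x ^ 2 + t ^ 2 * c1) * (x ^ 2 + t ^ 2 * c2)
            ≤ (b ^ 2 + t ^ 2 * c2) * (b ^ 2 + t ^ 2 * c2) := mul_le_mul hA hB hd2.le hD.le
        _ = (b ^ 2 + t ^ 2 * c2) ^ 2 := by ring
      simpa using this
    have hsplit := integral_sub hi1 hi2
    rw [hsplit] at key
    linarith
  -- the continuous function G c = ∫ (x² + t² max c 0)⁻¹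
  have hGcont : Continuous (fun c : ℝ => ∫ x, (x ^ 2 + t ^ 2 * max c 0)⁻¹ ∂μD) := by
    apply continuous_of_dominated (bound := fun _ => (a ^ 2)⁻¹)
    · intro c
      exact (by fun_prop : Measurable fun x : ℝ => (x ^ 2 + t ^ 2 * max c 0)⁻¹).aestronglyMeasurable
    · intro c
      filter_upwards [hmem] with x hx
      have h1 : a ^ 2 ≤ x ^ 2 + t ^ 2 * max c 0 :=
        le_add_of_le_of_nonneg (pow_le_pow_left₀ ha.le hx.1 2)
          (mul_nonneg (sq_nonneg t) (le_max_right c 0))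
      rw [Real.norm_eq_abs, abs_of_nonneg (by positivity)]
      exact inv_anti₀ (by positivity) h1
    · exact integrable_const _
    · filter_upwards [hmem] with x hx
      apply Continuous.inv₀
      · fun_prop
      · intro c
        have h1 : a ^ 2 ≤ x ^ 2 + t ^ 2 * max c 0 :=
          le_add_of_le_of_nonneg (pow_le_pow_left₀ ha.le hx.1 2)
            (mul_nonneg (sq_nonneg t) (le_max_right c 0))
        exact ne_of_gt (lt_of_lt_of_le (by positivity) h1)
  have hG0 : (∫ x, (x ^ 2 + t ^ 2 * max (0:ℝ) 0)⁻¹ ∂μD) = I := by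
    simp only [max_self, mul_zero, add_zero]
    rfl
  have hc0pos : (0:ℝ) < 2 / t := by positivity
  have hGc0 : (∫ x, (x ^ 2 + t ^ 2 * max (2 / t) 0)⁻¹ ∂μD) ≤ 1 / (2 * t) := by
    have hmax : max (2 / t) 0 = 2 / t := max_eq_left hc0pos.le
    have htc0 : 0 < t ^ 2 * (2 / t) := by positivity
    have h1 : ∫ x, (x ^ 2 + t ^ 2 * max (2 / t) 0)⁻¹ ∂μD
        ≤ ∫ _x, (t ^ 2 * (2 / t))⁻¹ ∂μD := by
      rw [hmax]
      apply integral_mono_ae (hint _ hc0pos.le) (integrable_const _)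
      filter_upwards with x
      exact inv_anti₀ htc0 (le_add_of_nonneg_left (sq_nonneg x))
    have h2 : ∫ _x, (t ^ 2 * (2 / t))⁻¹ ∂μD = (t ^ 2 * (2 / t))⁻¹ := by
      rw [integral_const, probReal_univ]
      simp
    have hval : (t ^ 2 * (2 / t))⁻¹ = 1 / (2 * t) := by
      field_simp
    rw [h2, hval] at h1
    exact h1
  have hhalf : 1 / (2 * t) < 1 / t := by
    rw [div_lt_div_iff₀ (by positivity) ht0]
    linarith
  -- intermediate value
  have hivt := intermediate_value_Icc' hc0pos.le hGcont.continuousOn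
  have hmemIcc : (1 / t) ∈ Set.Icc ((fun c : ℝ => ∫ x, (x ^ 2 + t ^ 2 * max c 0)⁻¹ ∂μD) (2 / t))
      ((fun c : ℝ => ∫ x, (x ^ 2 + t ^ 2 * max c 0)⁻¹ ∂μD) 0) := by
    constructor
    · exact le_of_lt (lt_of_le_of_lt hGc0 hhalf)
    · simpa [hG0] using h1t.le
  obtain ⟨c, hcIcc, hceq⟩ := hivt hmemIcc
  simp only at hceq
  have hcpos : 0 < c := by
    rcases lt_or_eq_of_le hcIcc.1 with h | h
    · exact h
    · exfalso
      rw [← h, hG0] at hceq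
      linarith
  have hmaxc : max c 0 = c := max_eq_left hcpos.le
  have hceq' : ∫ x, (x ^ 2 + t ^ 2 * c)⁻¹ ∂μD = 1 / t := by
    rw [← hmaxc]
    exact hceq
  refine ⟨c, ⟨hcpos, hceq'⟩, ?_⟩
  rintro c' ⟨hc'pos, hc'eq⟩
  rcases lt_trichotomy c' c with h | h | h
  · exfalso
    have := hstrict c' c hc'pos.le h
    rw [hceq', hc'eq] at this
    linarith
  · exact h
  · exfalso
    have := hstrict c c' hcpos.le h
    rw [hceq', hc'eq] at this
    linarith
end

section
/- Let M be an N×N complex matrix with positive definite imaginary part, i.e. Im M := (M − M*)/(2i) > 0, and suppose additionally that M is symmetric (Mᵀ = M). Define the real matrix F by F_{jk} = |M_{jk}|², and suppose J > 0 satisfies ‖F‖ ≤ 1/J² (operator norm). Define R by R_{jk} = (M_{jk})². Then for every nonzero vector v ∈ ℂ^N, Re⟨v, (Id − J²R)v⟩ > 0; in particular Id − J²R is invertible and Re⟨w, (Id−J²R)^{-1} w⟩ > 0 for every nonzero w. -/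
open Matrix
open scoped ComplexOrder
open scoped RealInnerProductSpace

/-- For M complex symmetric with positive definite imaginary
part, F the entrywise square-modulus matrix with operator norm ≤ 1/J², and R
the entrywise square, Re⟨v, (Id − J²R)v⟩ > 0 for all nonzero v; in particular
Id − J²R is invertible and Re⟨w,(Id−J²R)⁻¹w⟩ > 0 for nonzero w. -/
theorem stmt5 (N : ℕ) (M : Matrix (Fin N) (Fin N) ℂ) (hsym : Mᵀ = M)
    (hIm : (((2 : ℂ) * Complex.I)⁻¹ • (M - Mᴴ)).PosDef)
    (J : ℝ) (hJ : 0 < J)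
    (F : Matrix (Fin N) (Fin N) ℝ) (hF : ∀ j k, F j k = ‖M j k‖ ^ 2)
    (hFnorm : ‖Matrix.toEuclideanCLM (𝕜 := ℝ) F‖ ≤ 1 / J ^ 2)
    (R : Matrix (Fin N) (Fin N) ℂ) (hR : ∀ j k, R j k = (M j k) ^ 2) :
    (∀ v : Fin N → ℂ, v ≠ 0 →
      0 < (star v ⬝ᵥ ((1 - (J ^ 2 : ℂ) • R) *ᵥ v)).re) ∧
    IsUnit (1 - (J ^ 2 : ℂ) • R) ∧
    (∀ w : Fin N → ℂ, w ≠ 0 →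
      0 < (star w ⬝ᵥ ((1 - (J ^ 2 : ℂ) • R)⁻¹ *ᵥ w)).re) := by
  -- diagonal of Im M is positive
  have hdiag : ∀ j, 0 < (M j j).im := by
    intro j
    have h := hIm.dotProduct_mulVec_pos (x := Pi.single j 1) (by
      intro h
      have := congrFun h j
      simp [Pi.single_apply] at this)
    have hentry : star (Pi.single j 1 : Fin N → ℂ) ⬝ᵥ
        ((((2 : ℂ) * Complex.I)⁻¹ • (M - Mᴴ)) *ᵥ Pi.single j 1)
        = ((2 : ℂ) * Complex.I)⁻¹ * (M j j - (starRingEnd ℂ) (M j j)) := by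
      simp [dotProduct, mulVec, Pi.single_apply, Finset.sum_ite_eq,
        Matrix.sub_apply, Matrix.conjTranspose_apply, mul_comm]
    rw [hentry] at h
    have hz : ((2 : ℂ) * Complex.I)⁻¹ * (M j j - (starRingEnd ℂ) (M j j))
        = ((M j j).im : ℂ) := by
      have : M j j - (starRingEnd ℂ) (M j j) = (2 * (M j j).im : ℝ) * Complex.I := by
        simp [Complex.ext_iff, Complex.sub_re, Complex.sub_im]
        ring
      rw [this]
      field_simp
      push_cast
      ring
    rw [hz] at h
    exact_mod_cast h
  -- key strict quadratic inequality
  have key : ∀ v : Fin N → ℂ, v ≠ 0 →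
      (star v ⬝ᵥ (R *ᵥ v)).re < (1 / J ^ 2) * ∑ j, ‖v j‖ ^ 2 := by
    intro v hv
    obtain ⟨j0, hj0⟩ : ∃ j0, v j0 ≠ 0 := by
      by_contra h
      push_neg at h
      exact hv (funext h)
    set u : Fin N → ℝ := fun j => ‖v j‖ with hu
    have hsum : (star v ⬝ᵥ (R *ᵥ v)).re
        = ∑ j, ∑ k, ((starRingEnd ℂ) (v j) * (R j k * v k)).re := by
      simp [dotProduct, mulVec, Finset.mul_sum, Complex.re_sum]
    have hterm : ∀ j k, ((starRingEnd ℂ) (v j) * (R j k * v k)).re ≤ u j * (F j k * u k) := by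
      intro j k
      calc ((starRingEnd ℂ) (v j) * (R j k * v k)).re
          ≤ ‖(starRingEnd ℂ) (v j) * (R j k * v k)‖ := Complex.re_le_norm _
        _ = u j * (F j k * u k) := by
            simp [_root_.map_mul, hu, hF, hR, map_pow, mul_comm]
    have hstrict : ((starRingEnd ℂ) (v j0) * (R j0 j0 * v j0)).re
        < u j0 * (F j0 j0 * u j0) := by
      have h1 : (starRingEnd ℂ) (v j0) * (R j0 j0 * v j0)
          = (Complex.normSq (v j0) : ℂ) * R j0 j0 := by
        rw [Complex.normSq_eq_conj_mul_self]; push_cast; ring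
      have h2 : (R j0 j0).re < F j0 j0 := by
        rw [hR, hF, Complex.sq_norm, Complex.normSq_apply]
        have : ((M j0 j0) ^ 2).re = (M j0 j0).re ^ 2 - (M j0 j0).im ^ 2 := by
          simp [pow_two, Complex.mul_re]
        rw [this]
        nlinarith [hdiag j0]
      have h3 : 0 < Complex.normSq (v j0) := Complex.normSq_pos.mpr hj0
      have h4 : u j0 * (F j0 j0 * u j0) = Complex.normSq (v j0) * F j0 j0 := by
        rw [hu]
        simp only []
        rw [← Complex.sq_norm]
        ring
      rw [h1, h4]
      simp only [Complex.re_ofReal_mul, Complex.ofReal_re]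
      exact (mul_lt_mul_iff_right₀ h3).mpr h2
    have hlt : (star v ⬝ᵥ (R *ᵥ v)).re < ∑ j, ∑ k, u j * (F j k * u k) := by
      rw [hsum]
      apply Finset.sum_lt_sum
      · intro j _
        exact Finset.sum_le_sum fun k _ => hterm j k
      · refine ⟨j0, Finset.mem_univ _, ?_⟩
        apply Finset.sum_lt_sum
        · intro k _; exact hterm j0 k
        · exact ⟨j0, Finset.mem_univ _, hstrict⟩
    -- bound the F quadratic form by the operator norm
    set T := Matrix.toEuclideanCLM (𝕜 := ℝ) F with hT
    set x : EuclideanSpace ℝ (Fin N) := (WithLp.equiv _ _).symm u with hx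
    have hTx : T x = (WithLp.equiv _ _).symm (F *ᵥ u) := by
      rw [hx, hT, WithLp.equiv_symm_apply, Matrix.toEuclideanCLM_toLp]
    have hinner : ⟪x, T x⟫ = ∑ j, ∑ k, u j * (F j k * u k) := by
      rw [hTx]
      simp [PiLp.inner_apply, hx, WithLp.equiv_symm_apply, mulVec, dotProduct,
        Finset.mul_sum]
      refine Finset.sum_congr rfl fun j _ => ?_
      rw [Finset.sum_mul]
      exact Finset.sum_congr rfl fun k _ => by ring
    have hnormx : ‖x‖ ^ 2 = ∑ j, ‖v j‖ ^ 2 := by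
      rw [← real_inner_self_eq_norm_sq]
      simp [PiLp.inner_apply, hx, WithLp.equiv_symm_apply, hu, pow_two]
      rw [← pow_two, EuclideanSpace.norm_sq_eq]
      simp [pow_two]
    have hCS : ⟪x, T x⟫ ≤ (1 / J ^ 2) * ‖x‖ ^ 2 := by
      calc ⟪x, T x⟫ ≤ ‖x‖ * ‖T x‖ := real_inner_le_norm x (T x)
        _ ≤ ‖x‖ * (‖T‖ * ‖x‖) := by
            exact mul_le_mul_of_nonneg_left (T.le_opNorm x) (norm_nonneg x)
        _ ≤ (1 / J ^ 2) * ‖x‖ ^ 2 := by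
            nlinarith [norm_nonneg x, norm_nonneg T, hFnorm]
    calc (star v ⬝ᵥ (R *ᵥ v)).re < ∑ j, ∑ k, u j * (F j k * u k) := hlt
      _ = ⟪x, T x⟫ := hinner.symm
      _ ≤ (1 / J ^ 2) * ‖x‖ ^ 2 := hCS
      _ = (1 / J ^ 2) * ∑ j, ‖v j‖ ^ 2 := by rw [hnormx]
  -- part 1
  have part1 : ∀ v : Fin N → ℂ, v ≠ 0 →
      0 < (star v ⬝ᵥ ((1 - (J ^ 2 : ℂ) • R) *ᵥ v)).re := by
    intro v hv
    have hmv : (1 - (J ^ 2 : ℂ) • R) *ᵥ v = v - (J ^ 2 : ℂ) • (R *ᵥ v) := by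
      rw [Matrix.sub_mulVec, Matrix.one_mulVec, Matrix.smul_mulVec]
    have hdot : star v ⬝ᵥ ((1 - (J ^ 2 : ℂ) • R) *ᵥ v)
        = star v ⬝ᵥ v - (J ^ 2 : ℂ) * (star v ⬝ᵥ (R *ᵥ v)) := by
      rw [hmv, dotProduct_sub, dotProduct_smul, smul_eq_mul]
    have hvv : (star v ⬝ᵥ v).re = ∑ j, ‖v j‖ ^ 2 := by
      simp [dotProduct, Complex.re_sum, Complex.mul_re, ← Complex.normSq_apply,
        Complex.sq_norm, Complex.normSq_apply]
    have hJ2 : ((J : ℂ) ^ 2) = ((J ^ 2 : ℝ) : ℂ) := by push_cast; ring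
    have hre : (star v ⬝ᵥ ((1 - (J ^ 2 : ℂ) • R) *ᵥ v)).re
        = (∑ j, ‖v j‖ ^ 2) - J ^ 2 * (star v ⬝ᵥ (R *ᵥ v)).re := by
      rw [hdot, Complex.sub_re, hvv, hJ2, Complex.re_ofReal_mul]
    rw [hre]
    have hk := key v hv
    have hJ2pos : (0:ℝ) < J ^ 2 := by positivity
    have h1 : J ^ 2 * (star v ⬝ᵥ (R *ᵥ v)).re
        < J ^ 2 * (1 / J ^ 2 * ∑ j, ‖v j‖ ^ 2) :=
      (mul_lt_mul_iff_right₀ hJ2pos).mpr hk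
    have h2 : J ^ 2 * (1 / J ^ 2 * ∑ j, ‖v j‖ ^ 2)
        = ∑ j, ‖v j‖ ^ 2 := by field_simp
    linarith
  refine ⟨part1, ?_, ?_⟩
  case _ =>
    have hdet : (1 - (J ^ 2 : ℂ) • R).det ≠ 0 := by
      intro h
      obtain ⟨v, hv, hv0⟩ := (Matrix.exists_mulVec_eq_zero_iff).mpr h
      have := part1 v hv
      rw [hv0] at this
      simp at this
    exact (Matrix.isUnit_iff_isUnit_det _).mpr (isUnit_iff_ne_zero.mpr hdet)
  case _ =>
    intro w hw
    have hdet : (1 - (J ^ 2 : ℂ) • R).det ≠ 0 := by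
      intro h
      obtain ⟨v, hv, hv0⟩ := (Matrix.exists_mulVec_eq_zero_iff).mpr h
      have := part1 v hv
      rw [hv0] at this
      simp at this
    set A := 1 - (J ^ 2 : ℂ) • R with hA
    set v := A⁻¹ *ᵥ w with hvdef
    have hAv : A *ᵥ v = w := by
      rw [hvdef, Matrix.mulVec_mulVec, Matrix.mul_nonsing_inv A (isUnit_iff_ne_zero.mpr hdet),
        Matrix.one_mulVec]
    have hvne : v ≠ 0 := by
      intro h
      apply hw
      rw [← hAv, h, Matrix.mulVec_zero]
    have hconj : star w ⬝ᵥ (A⁻¹ *ᵥ w) = star (star v ⬝ᵥ (A *ᵥ v)) := by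
      rw [hAv, ← hvdef, Matrix.star_dotProduct]
    have := part1 v hvne
    rw [hconj]
    simpa using this
end

section
/- For F(u,t) = −∫log(λ)dμ_D(λ) + ∫ log|λ−u| dμ_t(λ) − u²/(2t), with μ_t = ρ_{sc,t} ⊞ μ_D and μ_D a probability measure compactly supported in (0,∞), the map u ↦ F(u,t) is concave on ℝ for every t > 0. -/
open MeasureTheory Complex Set Metric Filter

namespace Stmt14

variable {μ : Measure ℝ}

lemma ae_mem_of_compl_null {s : Set ℝ} (h : μ sᶜ = 0) : ∀ᵐ x ∂μ, x ∈ s := by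
  rw [MeasureTheory.ae_iff]
  simpa [compl_def] using h

lemma integrable_of_cont {E : Type*} [NormedAddCommGroup E] [IsFiniteMeasure μ]
    {c d : ℝ} (h : μ (Set.Icc c d)ᶜ = 0) (g : ℝ → E) (hg : Continuous g) :
    Integrable g μ := by
  obtain ⟨C, hC⟩ := (isCompact_Icc (a := c) (b := d)).exists_bound_of_continuousOn
    hg.continuousOn
  refine Integrable.mono' (integrable_const C) hg.aestronglyMeasurable ?_
  filter_upwards [ae_mem_of_compl_null h] with x hx using hC x hx

-- Cauchy-Schwarz for probability measures
lemma sq_integral_le [IsProbabilityMeasure μ] {f : ℝ → ℝ} (hf : Integrable f μ)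
    (hf2 : Integrable (fun x => f x ^ 2) μ) : (∫ x, f x ∂μ) ^ 2 ≤ ∫ x, f x ^ 2 ∂μ := by
  set c := ∫ x, f x ∂μ with hc
  have h0 : 0 ≤ ∫ x, (f x - c) ^ 2 ∂μ := integral_nonneg fun x => sq_nonneg _
  have hexp : ∀ x, (f x - c) ^ 2 = f x ^ 2 - (2 * c) * f x + c ^ 2 := by intro x; ring
  rw [show (fun x => (f x - c) ^ 2) = fun x => f x ^ 2 - (2 * c) * f x + c ^ 2 from funext hexp]
    at h0
  rw [integral_add (by exact (hf2.sub (hf.const_mul _))) (integrable_const _),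
    integral_sub hf2 (hf.const_mul _), integral_const_mul, integral_const] at h0
  simp only [probReal_univ, measure_univ, ENNReal.toReal_one, smul_eq_mul, one_mul] at h0
  nlinarith [h0]

noncomputable def st (μ : Measure ℝ) (z : ℂ) : ℂ := ∫ x, ((x : ℂ) - z)⁻¹ ∂μ

lemma sub_ne_zero_of_im {z : ℂ} (hz : z.im ≠ 0) (x : ℝ) : (x : ℂ) - z ≠ 0 := by
  intro h
  have : ((x : ℂ) - z).im = 0 := by rw [h]; simp
  simp only [sub_im, ofReal_im, zero_sub, neg_eq_zero] at this
  exact hz this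

lemma im_le_norm_sub (z : ℂ) (x : ℝ) : |z.im| ≤ ‖(x : ℂ) - z‖ := by
  have h := Complex.abs_im_le_norm ((x : ℂ) - z)
  simpa using h

lemma norm_inv_sub_le {z : ℂ} (hz : 0 < z.im) (x : ℝ) : ‖((x : ℂ) - z)⁻¹‖ ≤ z.im⁻¹ := by
  rw [norm_inv]
  exact inv_anti₀ hz (by simpa [abs_of_pos hz] using im_le_norm_sub z x)

variable {μ : Measure ℝ} [IsProbabilityMeasure μ] {c d : ℝ}

lemma integrable_inv_sub (h : μ (Set.Icc c d)ᶜ = 0) {z : ℂ} (hz : z.im ≠ 0) :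
    Integrable (fun x : ℝ => ((x : ℂ) - z)⁻¹) μ :=
  integrable_of_cont h _
    ((continuous_ofReal.sub continuous_const).inv₀ (fun x => sub_ne_zero_of_im hz x))

lemma integrable_inv_sub_sq (h : μ (Set.Icc c d)ᶜ = 0) {z : ℂ} (hz : z.im ≠ 0) :
    Integrable (fun x : ℝ => (((x : ℂ) - z)⁻¹) ^ 2) μ :=
  integrable_of_cont h _
    (((continuous_ofReal.sub continuous_const).inv₀ (fun x => sub_ne_zero_of_im hz x)).pow 2)

lemma im_inv_sub (z : ℂ) (x : ℝ) :
    (((x : ℂ) - z)⁻¹).im = z.im / Complex.normSq ((x : ℂ) - z) := by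
  rw [Complex.inv_im]
  simp [neg_div]

lemma st_im (h : μ (Set.Icc c d)ᶜ = 0) {z : ℂ} (hz : z.im ≠ 0) :
    (st μ z).im = ∫ x, z.im / Complex.normSq ((x : ℂ) - z) ∂μ := by
  rw [st, ← Complex.imCLM_apply,
    ← ContinuousLinearMap.integral_comp_comm _ (integrable_inv_sub h hz)]
  congr 1; ext x
  simpa using im_inv_sub z x

lemma st_re (h : μ (Set.Icc c d)ᶜ = 0) {z : ℂ} (hz : z.im ≠ 0) :
    (st μ z).re = ∫ x, (x - z.re) / Complex.normSq ((x : ℂ) - z) ∂μ := by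
  rw [st, ← Complex.reCLM_apply,
    ← ContinuousLinearMap.integral_comp_comm _ (integrable_inv_sub h hz)]
  congr 1; ext x
  rw [Complex.reCLM_apply, Complex.inv_re]
  simp

lemma st_im_pos (h : μ (Set.Icc c d)ᶜ = 0) {z : ℂ} (hz : 0 < z.im) :
    0 < (st μ z).im := by
  rw [st_im h hz.ne']
  have hpos : ∀ x : ℝ, 0 < z.im / Complex.normSq ((x : ℂ) - z) := by
    intro x
    apply div_pos hz
    rw [Complex.normSq_pos]
    exact sub_ne_zero_of_im hz.ne' x
  have hint : Integrable (fun x : ℝ => z.im / Complex.normSq ((x : ℂ) - z)) μ := by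
    apply integrable_of_cont h
    apply continuous_const.div
    · exact Complex.continuous_normSq.comp (continuous_ofReal.sub continuous_const)
    · intro x; exact (Complex.normSq_pos.2 (sub_ne_zero_of_im hz.ne' x)).ne'
  rw [integral_pos_iff_support_of_nonneg (fun x => (hpos x).le) hint]
  have : Function.support (fun x : ℝ => z.im / Complex.normSq ((x : ℂ) - z)) = Set.univ := by
    ext x; simp only [Function.mem_support, Set.mem_univ, iff_true]
    exact (hpos x).ne'
  rw [this]
  simp

lemma hasDerivAt_inv_sub (x : ℝ) {w : ℂ} (hw : (x : ℂ) - w ≠ 0) :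
    HasDerivAt (fun z : ℂ => ((x : ℂ) - z)⁻¹) ((((x : ℂ) - w)⁻¹) ^ 2) w := by
  have h1 : HasDerivAt (fun z : ℂ => (x : ℂ) - z) (-1) w :=
    by simpa using (hasDerivAt_id' w).const_sub (x : ℂ)
  have := h1.inv hw
  refine this.congr_deriv ?_
  rw [neg_neg, one_div, inv_pow]

lemma hasDerivAt_st (h : μ (Set.Icc c d)ᶜ = 0) {z₀ : ℂ} (hz : 0 < z₀.im) :
    HasDerivAt (st μ) (∫ x, (((x : ℂ) - z₀)⁻¹) ^ 2 ∂μ) z₀ := by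
  set ε := z₀.im / 2 with hε
  have hε_pos : 0 < ε := by positivity
  have him : ∀ z ∈ ball z₀ ε, ε < z.im := by
    intro z hz'
    have : |z.im - z₀.im| ≤ dist z z₀ := by
      rw [Complex.dist_eq]
      simpa using Complex.abs_im_le_norm (z - z₀)
    rw [mem_ball] at hz'
    have := (abs_lt.1 (lt_of_le_of_lt this hz')).1
    linarith
  refine (hasDerivAt_integral_of_dominated_loc_of_deriv_le (F := fun z (x : ℝ) => ((x : ℂ) - z)⁻¹)
    (F' := fun z (x : ℝ) => (((x : ℂ) - z)⁻¹) ^ 2) (bound := fun _ => (ε ^ 2)⁻¹)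
    (ball_mem_nhds z₀ hε_pos) ?_ ?_ ?_ ?_ ?_ ?_).2
  · filter_upwards with z
    exact ((measurable_ofReal.sub measurable_const).inv).aestronglyMeasurable
  · exact integrable_inv_sub h hz.ne'
  · exact (integrable_inv_sub_sq h hz.ne').aestronglyMeasurable
  · filter_upwards with x z hz'
    have hzim : 0 < z.im := lt_trans hε_pos (him z hz')
    have : ‖((x : ℂ) - z)⁻¹‖ ≤ z.im⁻¹ := norm_inv_sub_le hzim x
    calc ‖(((x : ℂ) - z)⁻¹) ^ 2‖ = ‖((x : ℂ) - z)⁻¹‖ ^ 2 := by rw [norm_pow]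
      _ ≤ (z.im⁻¹) ^ 2 := pow_le_pow_left₀ (norm_nonneg _) this 2
      _ ≤ (ε⁻¹) ^ 2 := by
          have h2 : z.im⁻¹ ≤ ε⁻¹ := inv_anti₀ hε_pos (him z hz').le
          have h3 : (0:ℝ) ≤ z.im⁻¹ := by positivity
          gcongr
      _ = (ε ^ 2)⁻¹ := by rw [inv_pow]
  · exact integrable_const _
  · filter_upwards with x z hz'
    have hzim : 0 < z.im := lt_trans hε_pos (him z hz')
    exact hasDerivAt_inv_sub x (sub_ne_zero_of_im hzim.ne' x)

section Pastur

variable {μD μt : Measure ℝ} [IsProbabilityMeasure μD] [IsProbabilityMeasure μt]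
  {a b c d t : ℝ}

lemma pastur_bounds (hsuppD : μD (Set.Icc a b)ᶜ = 0) (hsuppt : μt (Set.Icc c d)ᶜ = 0)
    (ht : 0 < t)
    (hpastur : ∀ z : ℂ, 0 < z.im →
      (∫ x, ((x : ℂ) - z)⁻¹ ∂μt) =
        ∫ x, ((x : ℂ) - z - t * ∫ y, ((y : ℂ) - z)⁻¹ ∂μt)⁻¹ ∂μD)
    {z : ℂ} (hz : 0 < z.im) :
    ‖st μt z‖ ≤ Real.sqrt t⁻¹ ∧
      -t⁻¹ ≤ (∫ x, (((x : ℂ) - z)⁻¹) ^ 2 ∂μt).re := by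
  classical
  set m : ℂ := st μt z with hm_def
  set w : ℂ := z + (t : ℂ) * m with hw_def
  have hm_im : 0 < m.im := st_im_pos hsuppt hz
  have hw_im : w.im = z.im + t * m.im := by
    simp [hw_def, Complex.add_im, Complex.mul_im]
  have hw_pos : 0 < w.im := by rw [hw_im]; positivity
  -- Pastur rewritten: m = st μD w
  have hPz : m = st μD w := by
    have h1 := hpastur z hz
    calc m = ∫ x, ((x : ℂ) - z - t * ∫ y, ((y : ℂ) - z)⁻¹ ∂μt)⁻¹ ∂μD := h1
      _ = st μD w := by
        rw [st]; congr 1; ext x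
        congr 1
        have hmm : (∫ y, ((y : ℂ) - z)⁻¹ ∂μt) = m := rfl
        rw [hmm, hw_def]; ring
  -- the real integral I
  set I : ℝ := ∫ x, (Complex.normSq ((x : ℂ) - w))⁻¹ ∂μD with hI_def
  have hm_im_eq : m.im = w.im * I := by
    rw [hPz, st_im hsuppD hw_pos.ne']
    rw [hI_def, ← integral_const_mul]
    simp [div_eq_mul_inv]
  have hI_pos : 0 < I := by
    by_contra hcon
    push_neg at hcon
    nlinarith [hm_im_eq, hw_pos, hm_im]
  have htI : t * I < 1 := by
    have hIval : I = m.im / w.im := by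
      field_simp [hm_im_eq]
      rw [hm_im_eq]; ring
    have hden : 0 < z.im + t * m.im := by positivity
    rw [hIval, hw_im, ← mul_div_assoc, div_lt_one hden]
    linarith
  have hI_lt : I < t⁻¹ := by
    have h2 : t * I < t * t⁻¹ := by rw [mul_inv_cancel₀ ht.ne']; exact htI
    exact lt_of_mul_lt_mul_left h2 ht.le
  -- norm of inverse function
  set f : ℝ → ℝ := fun x => ‖((x : ℂ) - w)⁻¹‖ with hf_def
  have hf_cont : Continuous f :=
    ((continuous_ofReal.sub continuous_const).inv₀
      (fun x => sub_ne_zero_of_im hw_pos.ne' x)).norm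
  have hf_int : Integrable f μD := integrable_of_cont hsuppD _ hf_cont
  have hf_sq : ∀ x : ℝ, f x ^ 2 = (Complex.normSq ((x : ℂ) - w))⁻¹ := by
    intro x
    rw [hf_def]
    simp only [norm_inv]
    rw [inv_pow, Complex.sq_norm]
  have hf2_int : Integrable (fun x => f x ^ 2) μD := by
    simp only [hf_sq]
    apply integrable_of_cont hsuppD
    exact (Complex.continuous_normSq.comp
      (continuous_ofReal.sub continuous_const)).inv₀
      (fun x => (Complex.normSq_pos.2 (sub_ne_zero_of_im hw_pos.ne' x)).ne')
  have hintf2 : (∫ x, f x ^ 2 ∂μD) = I := by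
    rw [hI_def]; congr 1; ext x; exact hf_sq x
  have hnorm_m : ‖m‖ ^ 2 ≤ I := by
    have h1 : ‖m‖ ≤ ∫ x, f x ∂μD := by
      rw [hPz, st]
      exact norm_integral_le_integral_norm _
    have h2 : (∫ x, f x ∂μD) ^ 2 ≤ ∫ x, f x ^ 2 ∂μD := sq_integral_le hf_int hf2_int
    calc ‖m‖ ^ 2 ≤ (∫ x, f x ∂μD) ^ 2 :=
          pow_le_pow_left₀ (norm_nonneg _) h1 2
      _ ≤ ∫ x, f x ^ 2 ∂μD := h2
      _ = I := hintf2
  constructor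
  · rw [show Real.sqrt t⁻¹ = Real.sqrt t⁻¹ from rfl]
    rw [← Real.sqrt_sq (norm_nonneg m)]
    exact Real.sqrt_le_sqrt (le_of_lt (lt_of_le_of_lt hnorm_m hI_lt))
  -- second part: derivative bound
  · set J : ℂ := ∫ x, (((x : ℂ) - w)⁻¹) ^ 2 ∂μD with hJ_def
    set m' : ℂ := ∫ x, (((x : ℂ) - z)⁻¹) ^ 2 ∂μt with hm'_def
    have hJ_norm : ‖J‖ ≤ I := by
      calc ‖J‖ ≤ ∫ x, ‖(((x : ℂ) - w)⁻¹) ^ 2‖ ∂μD := norm_integral_le_integral_norm _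
        _ = ∫ x, f x ^ 2 ∂μD := by congr 1; ext x; rw [norm_pow]
        _ = I := hintf2
    -- derivative relation
    have hopen : IsOpen {ζ : ℂ | 0 < ζ.im} := isOpen_lt continuous_const Complex.continuous_im
    have hst_deriv : HasDerivAt (st μt) m' z := hasDerivAt_st hsuppt hz
    have hinner : HasDerivAt (fun ζ => ζ + (t : ℂ) * st μt ζ) (1 + (t : ℂ) * m') z :=
      (hasDerivAt_id z).add (hst_deriv.const_mul _)
    have houter : HasDerivAt (st μD) J w := hasDerivAt_st hsuppD hw_pos
    have hcomp : HasDerivAt (fun ζ => st μD (ζ + (t : ℂ) * st μt ζ))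
        (J * (1 + (t : ℂ) * m')) z := by
      have h := HasDerivAt.comp z
        (show HasDerivAt (st μD) J ((fun ζ => ζ + (t : ℂ) * st μt ζ) z) from houter) hinner
      exact h
    have heq : (st μt) =ᶠ[nhds z] (fun ζ => st μD (ζ + (t : ℂ) * st μt ζ)) := by
      filter_upwards [hopen.mem_nhds hz] with ζ hζ
      have h1 := hpastur ζ hζ
      calc st μt ζ = ∫ x, ((x : ℂ) - ζ - t * ∫ y, ((y : ℂ) - ζ)⁻¹ ∂μt)⁻¹ ∂μD := h1
        _ = st μD (ζ + (t : ℂ) * st μt ζ) := by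
            rw [st]; congr 1; ext x; congr 1
            have hmm : (∫ y, ((y : ℂ) - ζ)⁻¹ ∂μt) = st μt ζ := rfl
            rw [hmm]; ring
    have hrel : m' = J * (1 + (t : ℂ) * m') :=
      hst_deriv.unique (hcomp.congr_of_eventuallyEq heq)
    have htJ : ‖(t : ℂ) * J‖ < 1 := by
      rw [norm_mul, Complex.norm_real, Real.norm_eq_abs, abs_of_pos ht]
      calc t * ‖J‖ ≤ t * I := by gcongr
        _ < 1 := htI
    have hne : (1 : ℂ) - (t : ℂ) * J ≠ 0 := by
      intro hcon
      have : (1 : ℂ) = (t : ℂ) * J := by linear_combination hcon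
      rw [← this] at htJ
      simp at htJ
    have hkey : ((1 : ℂ) + (t : ℂ) * m') * ((1 : ℂ) - (t : ℂ) * J) = 1 := by
      linear_combination (t : ℂ) * hrel
    have hinv : (1 : ℂ) + (t : ℂ) * m' = ((1 : ℂ) - (t : ℂ) * J)⁻¹ :=
      eq_inv_of_mul_eq_one_left (by linear_combination hkey)
    have hre_pos : 0 ≤ ((1 : ℂ) + (t : ℂ) * m').re := by
      rw [hinv, Complex.inv_re]
      apply div_nonneg _ (Complex.normSq_nonneg _)
      have : J.re ≤ ‖J‖ := Complex.re_le_norm J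
      simp only [Complex.sub_re, Complex.one_re, Complex.mul_re, Complex.ofReal_re,
        Complex.ofReal_im, zero_mul, sub_zero]
      nlinarith [hJ_norm, hI_lt]
    have hre : ((1 : ℂ) + (t : ℂ) * m').re = 1 + t * m'.re := by
      simp [Complex.add_re, Complex.mul_re]
    rw [hre] at hre_pos
    rw [neg_le, ← neg_neg (t⁻¹)]
    have : -m'.re ≤ t⁻¹ := by
      rw [← mul_le_mul_iff_of_pos_left ht]
      rw [mul_inv_cancel₀ ht.ne']
      linarith
    linarith

end Pastur

section Phi

variable {μ : Measure ℝ} [IsProbabilityMeasure μ] {c d : ℝ}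

lemma z_im (u ε : ℝ) : ((u : ℂ) + ε * Complex.I).im = ε := by simp

lemma z_re (u ε : ℝ) : ((u : ℂ) + ε * Complex.I).re = u := by simp

lemma normSq_z (x u ε : ℝ) :
    Complex.normSq ((x : ℂ) - ((u : ℂ) + ε * Complex.I)) = (x - u) ^ 2 + ε ^ 2 := by
  rw [Complex.normSq_apply]
  simp
  ring

lemma abs_div_sq_le (s ε : ℝ) (hε : 0 < ε) : |s| / (s ^ 2 + ε ^ 2) ≤ (2 * ε)⁻¹ := by
  rw [div_le_iff₀ (by positivity)]
  rw [inv_mul_eq_div, le_div_iff₀ (by positivity)]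
  nlinarith [sq_nonneg (|s| - ε), _root_.sq_abs s]

lemma hasDerivAt_phi (h : μ (Set.Icc c d)ᶜ = 0) {ε : ℝ} (hε : 0 < ε) (u₀ : ℝ) :
    HasDerivAt (fun u => ∫ x, Real.log ((x - u) ^ 2 + ε ^ 2) / 2 ∂μ)
      (-(st μ ((u₀ : ℂ) + ε * Complex.I)).re) u₀ := by
  have hcont : ∀ u : ℝ, Continuous (fun x : ℝ => Real.log ((x - u) ^ 2 + ε ^ 2) / 2) := by
    intro u
    apply Continuous.div_const
    apply Continuous.log
    · continuity
    · intro x; positivity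
  have key := hasDerivAt_integral_of_dominated_loc_of_deriv_le
    (F := fun u (x : ℝ) => Real.log ((x - u) ^ 2 + ε ^ 2) / 2)
    (F' := fun u (x : ℝ) => (u - x) / ((x - u) ^ 2 + ε ^ 2))
    (bound := fun _ => (2 * ε)⁻¹) (x₀ := u₀) (ball_mem_nhds u₀ one_pos)
    (by filter_upwards with u using (hcont u).aestronglyMeasurable)
    (integrable_of_cont h _ (hcont u₀))
    (by
      apply Continuous.aestronglyMeasurable
      apply Continuous.div
      · continuity
      · continuity
      · intro x; positivity)
    (by
      filter_upwards with x u hu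
      rw [Real.norm_eq_abs, abs_div,
        abs_of_pos (show (0:ℝ) < (x - u) ^ 2 + ε ^ 2 by positivity)]
      have habs : |u - x| = |x - u| := abs_sub_comm u x
      calc |u - x| / ((x - u) ^ 2 + ε ^ 2) = |x - u| / ((x - u) ^ 2 + ε ^ 2) := by rw [habs]
        _ ≤ (2 * ε)⁻¹ := by
            exact abs_div_sq_le (x - u) ε hε)
    (integrable_const _)
    (by
      filter_upwards with x u hu
      have hinner : HasDerivAt (fun u : ℝ => (x - u) ^ 2 + ε ^ 2) (-2 * (x - u)) u := by
        have h1 : HasDerivAt (fun u : ℝ => x - u) (-1) u := by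
          simpa using (hasDerivAt_id' u).const_sub x
        have h2 := (h1.pow 2).add_const (ε ^ 2)
        refine h2.congr_deriv ?_
        ring
      have hlog := hinner.log (by positivity)
      have hdiv := hlog.div_const 2
      refine hdiv.congr_deriv ?_
      ring)
  have heq : (∫ x, (u₀ - x) / ((x - u₀) ^ 2 + ε ^ 2) ∂μ)
      = -(st μ ((u₀ : ℂ) + ε * Complex.I)).re := by
    rw [st_re h (by rw [z_im]; exact hε.ne'), ← integral_neg]
    congr 1; ext x
    rw [normSq_z, z_re]
    ring
  rw [← heq]
  exact key.2

lemma hasDerivAt_st_real (h : μ (Set.Icc c d)ᶜ = 0) {ε : ℝ} (hε : 0 < ε) (u₀ : ℝ) :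
    HasDerivAt (fun u : ℝ => (st μ ((u : ℂ) + ε * Complex.I)).re)
      ((∫ x, (((x : ℂ) - ((u₀ : ℂ) + ε * Complex.I))⁻¹) ^ 2 ∂μ).re) u₀ := by
  have hz : (0 : ℝ) < ((u₀ : ℂ) + ε * Complex.I).im := by rw [z_im]; exact hε
  have hst := hasDerivAt_st h hz
  have hinner : HasDerivAt (fun ζ : ℂ => ζ + ε * Complex.I) 1 (u₀ : ℂ) :=
    (hasDerivAt_id _).add_const _
  have hcomp : HasDerivAt (fun ζ : ℂ => st μ (ζ + ε * Complex.I))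
      (∫ x, (((x : ℂ) - ((u₀ : ℂ) + ε * Complex.I))⁻¹) ^ 2 ∂μ) (u₀ : ℂ) := by
    have h2 := HasDerivAt.comp (u₀ : ℂ)
      (show HasDerivAt (st μ) _ ((fun ζ : ℂ => ζ + ε * Complex.I) (u₀ : ℂ)) from hst) hinner
    simpa [Function.comp_def] using h2
  have h3 := hcomp.comp_ofReal
  have h4 := Complex.reCLM.hasFDerivAt.comp_hasDerivAt u₀ h3
  exact h4

lemma meas_singleton_eq_zero (h : μ (Set.Icc c d)ᶜ = 0) {K : ℝ}
    (hst : ∀ u ε : ℝ, 0 < ε → (st μ ((u : ℂ) + ε * Complex.I)).im ≤ K) (u : ℝ) :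
    μ {u} = 0 := by
  have hz1 : (0 : ℝ) < ((u : ℂ) + (1:ℝ) * Complex.I).im := by rw [z_im]; norm_num
  have hKpos : 0 < K := lt_of_lt_of_le (st_im_pos h hz1) (hst u 1 one_pos)
  have key : ∀ ε : ℝ, 0 < ε → (μ {u}).toReal ≤ ε * K := by
    intro ε hε
    set z : ℂ := (u : ℂ) + ε * Complex.I with hz_def
    have hz : (0 : ℝ) < z.im := by rw [hz_def, z_im]; exact hε
    have him : (st μ z).im = ∫ x, ε / ((x - u) ^ 2 + ε ^ 2) ∂μ := by
      rw [st_im h hz.ne']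
      congr 1; ext x
      rw [hz_def, normSq_z, z_im]
    set g : ℝ → ℝ := fun x => ε ^ 2 / ((x - u) ^ 2 + ε ^ 2) with hg_def
    have hg_cont : Continuous g := by
      apply Continuous.div continuous_const (by continuity)
      intro x; positivity
    have hg_int : Integrable g μ := integrable_of_cont h _ hg_cont
    have hind_int : Integrable (Set.indicator {u} (fun _ => (1 : ℝ))) μ :=
      (integrable_const (1 : ℝ)).indicator (measurableSet_singleton u)
    have hind_le : ∀ x, Set.indicator {u} (fun _ => (1 : ℝ)) x ≤ g x := by
      intro x
      have hgu : g u = 1 := by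
        rw [hg_def]
        simp only [sub_self]
        rw [div_eq_one_iff_eq (by positivity)]
        ring
      by_cases hx : x = u
      · rw [hx, Set.indicator_of_mem (Set.mem_singleton u), hgu]
      · rw [Set.indicator_of_notMem (by simpa using hx)]
        have : (0:ℝ) < g x := by rw [hg_def]; positivity
        exact this.le
    have h1 : (μ {u}).toReal = ∫ x, Set.indicator {u} (fun _ => (1 : ℝ)) x ∂μ := by
      rw [integral_indicator_const (1 : ℝ) (measurableSet_singleton u)]
      simp
      rfl
    have h2 : ∫ x, Set.indicator {u} (fun _ => (1 : ℝ)) x ∂μ ≤ ∫ x, g x ∂μ :=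
      integral_mono hind_int hg_int hind_le
    have h3 : ∫ x, g x ∂μ = ε * (st μ z).im := by
      rw [him, ← integral_const_mul]
      congr 1; ext x
      rw [hg_def]
      field_simp
    calc (μ {u}).toReal ≤ ∫ x, g x ∂μ := h1 ▸ h2
      _ = ε * (st μ z).im := h3
      _ ≤ ε * K := by
          apply mul_le_mul_of_nonneg_left _ hε.le
          exact hst u ε hε
  have h0 : (μ {u}).toReal = 0 := by
    by_contra hne
    have hpos : 0 < (μ {u}).toReal :=
      lt_of_le_of_ne ENNReal.toReal_nonneg (Ne.symm hne)
    have hkey := key ((μ {u}).toReal / (2 * K)) (by positivity)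
    have h2K : (μ {u}).toReal / (2 * K) * K = (μ {u}).toReal / 2 := by
      field_simp
    rw [h2K] at hkey
    linarith
  have hfin : μ {u} ≠ ⊤ := measure_ne_top μ {u}
  exact (ENNReal.toReal_eq_zero_iff _).1 h0 |>.resolve_right hfin

lemma concave_phi (h : μ (Set.Icc c d)ᶜ = 0) {ε t : ℝ} (hε : 0 < ε) (ht : 0 < t)
    (hd2 : ∀ u : ℝ, -t⁻¹ ≤ (∫ x, (((x : ℂ) - ((u : ℂ) + ε * Complex.I))⁻¹) ^ 2 ∂μ).re) :
    ConcaveOn ℝ Set.univ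
      (fun u : ℝ => (∫ x, Real.log ((x - u) ^ 2 + ε ^ 2) / 2 ∂μ) - u ^ 2 / (2 * t)) := by
  set f' : ℝ → ℝ := fun u => -(st μ ((u : ℂ) + ε * Complex.I)).re - u / t with hf'_def
  set f'' : ℝ → ℝ :=
    fun u => -(∫ x, (((x : ℂ) - ((u : ℂ) + ε * Complex.I))⁻¹) ^ 2 ∂μ).re - t⁻¹ with hf''_def
  have hderiv1 : ∀ u : ℝ, HasDerivAt
      (fun u : ℝ => (∫ x, Real.log ((x - u) ^ 2 + ε ^ 2) / 2 ∂μ) - u ^ 2 / (2 * t)) (f' u) u := by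
    intro u
    have h1 := hasDerivAt_phi h hε u
    have h2 : HasDerivAt (fun u : ℝ => u ^ 2 / (2 * t)) (u / t) u := by
      have := (hasDerivAt_pow 2 u).div_const (2 * t)
      refine this.congr_deriv ?_
      ring
    exact h1.sub h2
  have hderiv2 : ∀ u : ℝ, HasDerivAt f' (f'' u) u := by
    intro u
    have h1 := (hasDerivAt_st_real h hε u).neg
    have h2 : HasDerivAt (fun u : ℝ => u / t) t⁻¹ u := by
      simpa [div_eq_mul_inv] using (hasDerivAt_id u).div_const t
    exact h1.sub h2
  apply concaveOn_of_hasDerivWithinAt2_nonpos (f' := f') (f'' := f'') convex_univ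
  · intro x _
    exact (hderiv1 x).continuousAt.continuousWithinAt
  · intro x _
    exact (hderiv1 x).hasDerivWithinAt
  · intro x _
    exact (hderiv2 x).hasDerivWithinAt
  · intro x _
    rw [hf''_def]
    have := hd2 x
    simp only
    linarith

lemma lipschitz_phi (h : μ (Set.Icc c d)ᶜ = 0) {ε K : ℝ} (hε : 0 < ε)
    (hK : ∀ u : ℝ, ‖st μ ((u : ℂ) + ε * Complex.I)‖ ≤ K) (u v : ℝ) :
    |(∫ x, Real.log ((x - v) ^ 2 + ε ^ 2) / 2 ∂μ) -
      (∫ x, Real.log ((x - u) ^ 2 + ε ^ 2) / 2 ∂μ)| ≤ K * |v - u| := by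
  have hmvt := Convex.norm_image_sub_le_of_norm_hasDerivWithin_le
    (f := fun u : ℝ => ∫ x, Real.log ((x - u) ^ 2 + ε ^ 2) / 2 ∂μ)
    (f' := fun u : ℝ => -(st μ ((u : ℂ) + ε * Complex.I)).re)
    (s := Set.univ) (C := K)
    (fun x _ => (hasDerivAt_phi h hε x).hasDerivWithinAt)
    (fun x _ => by
      rw [Real.norm_eq_abs, abs_neg]
      calc |(st μ ((x : ℂ) + ε * Complex.I)).re| ≤ ‖st μ ((x : ℂ) + ε * Complex.I)‖ := by
            exact Complex.abs_re_le_norm _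
        _ ≤ K := hK x)
    convex_univ (Set.mem_univ u) (Set.mem_univ v)
  simpa [Real.norm_eq_abs] using hmvt

lemma eps_pos (n : ℕ) : (0:ℝ) < 1 / (n + 1 : ℝ) := by positivity

lemma eps_anti : ∀ {n m : ℕ}, n ≤ m → (1 / (m + 1 : ℝ)) ≤ (1 / (n + 1 : ℝ)) := by
  intro n m hnm
  apply one_div_le_one_div_of_le (by positivity)
  have : (n : ℝ) ≤ m := Nat.cast_le.2 hnm
  linarith

lemma log_half_le {x y : ℝ} (hx : 0 < x) (hxy : x ≤ y) :
    Real.log x / 2 ≤ Real.log y / 2 := by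
  have := (Real.log_le_log_iff hx (lt_of_lt_of_le hx hxy)).2 hxy
  linarith

lemma log_abs_eq (u x : ℝ) : Real.log |x - u| = Real.log ((x - u) ^ 2) / 2 := by
  rw [← _root_.sq_abs, Real.log_pow, Real.log_abs]
  push_cast
  ring

lemma integrable_and_tendsto (h : μ (Set.Icc c d)ᶜ = 0) (u : ℝ) (hatom : μ {u} = 0)
    {B : ℝ}
    (hlow : ∀ n : ℕ, B ≤ ∫ x, Real.log ((x - u) ^ 2 + (1 / (n + 1 : ℝ)) ^ 2) / 2 ∂μ) :
    Integrable (fun x => Real.log |x - u|) μ ∧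
      Filter.Tendsto (fun n : ℕ => ∫ x, Real.log ((x - u) ^ 2 + (1 / (n + 1 : ℝ)) ^ 2) / 2 ∂μ)
        Filter.atTop (nhds (∫ x, Real.log |x - u| ∂μ)) := by
  set f : ℕ → ℝ → ℝ := fun n x => Real.log ((x - u) ^ 2 + (1 / (n + 1 : ℝ)) ^ 2) / 2 with hf_def
  set g : ℝ → ℝ := fun x => Real.log |x - u| with hg_def
  have hf_cont : ∀ n, Continuous (f n) := by
    intro n
    apply Continuous.div_const
    apply Continuous.log (by continuity)
    intro x
    have := eps_pos n
    positivity
  have hf_int : ∀ n, Integrable (f n) μ := fun n => integrable_of_cont h _ (hf_cont n)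
  have hg_meas : AEStronglyMeasurable g μ := by
    apply Measurable.aestronglyMeasurable
    exact Real.measurable_log.comp ((measurable_id.sub_const u).abs)
  have hae_ne : ∀ᵐ x ∂μ, x ≠ u := by
    rw [MeasureTheory.ae_iff]
    simpa using hatom
  have hf_anti : ∀ x n m, n ≤ m → f m x ≤ f n x := by
    intro x n m hnm
    apply log_half_le (by have := eps_pos m; positivity)
    have h1 := eps_anti hnm
    have h2 := eps_pos m
    nlinarith
  have hg_le : ∀ x, x ≠ u → ∀ n, g x ≤ f n x := by
    intro x hx n
    show Real.log |x - u| ≤ f n x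
    rw [log_abs_eq u x]
    apply log_half_le (by
      have : x - u ≠ 0 := sub_ne_zero.2 hx
      positivity)
    have := eps_pos n
    nlinarith
  have hg_tendsto : ∀ x, x ≠ u →
      Filter.Tendsto (fun n => f n x) Filter.atTop (nhds (g x)) := by
    intro x hx
    show Filter.Tendsto _ _ (nhds (Real.log |x - u|))
    rw [log_abs_eq u x]
    have h1 : Filter.Tendsto (fun n : ℕ => (x - u) ^ 2 + (1 / (n + 1 : ℝ)) ^ 2)
        Filter.atTop (nhds ((x - u) ^ 2)) := by
      have h2 : Filter.Tendsto (fun n : ℕ => (1 / (n + 1 : ℝ))) Filter.atTop (nhds 0) :=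
        tendsto_one_div_add_atTop_nhds_zero_nat
      have h3 := h2.pow 2
      have h4 := (tendsto_const_nhds (x := (x - u) ^ 2) (f := Filter.atTop (α := ℕ))).add h3
      simpa using h4
    have hne : (x - u) ^ 2 ≠ 0 := pow_ne_zero 2 (sub_ne_zero.2 hx)
    exact ((Real.continuousAt_log hne).tendsto.comp h1).div_const 2
  -- integrability of g
  have hdiff_nonneg : ∀ x, 0 ≤ f 0 x - g x ∨ True := fun _ => Or.inr trivial
  have hD_mono : ∀ x, Monotone (fun n => ENNReal.ofReal (f 0 x - f n x)) := by
    intro x n m hnm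
    exact ENNReal.ofReal_le_ofReal (by have := hf_anti x n m hnm; linarith)
  have hD_meas : ∀ n, AEMeasurable (fun x => ENNReal.ofReal (f 0 x - f n x)) μ := by
    intro n
    exact (ENNReal.measurable_ofReal.comp ((hf_cont 0).measurable.sub
      (hf_cont n).measurable)).aemeasurable
  have hD_lint : ∀ n, ∫⁻ x, ENNReal.ofReal (f 0 x - f n x) ∂μ
      ≤ ENNReal.ofReal ((∫ x, f 0 x ∂μ) - B) := by
    intro n
    have hnn : 0 ≤ᵐ[μ] fun x => f 0 x - f n x := by
      filter_upwards with x
      have := hf_anti x 0 n (Nat.zero_le n)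
      simp only [Pi.zero_apply]
      linarith
    rw [← ofReal_integral_eq_lintegral_ofReal
      (f := fun x => f 0 x - f n x) ((hf_int 0).sub (hf_int n)) hnn]
    apply ENNReal.ofReal_le_ofReal
    rw [integral_sub (hf_int 0) (hf_int n)]
    have hBn : B ≤ ∫ x, f n x ∂μ := hlow n
    linarith
  have hsup_eq : ∀ᵐ x ∂μ, (⨆ n, ENNReal.ofReal (f 0 x - f n x))
      = ENNReal.ofReal (f 0 x - g x) := by
    filter_upwards [hae_ne] with x hx
    have htnd : Filter.Tendsto (fun n => ENNReal.ofReal (f 0 x - f n x)) Filter.atTop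
        (nhds (ENNReal.ofReal (f 0 x - g x))) := by
      apply (ENNReal.continuous_ofReal.tendsto _).comp
      exact (tendsto_const_nhds).sub (hg_tendsto x hx)
    exact tendsto_nhds_unique (tendsto_atTop_iSup (hD_mono x)) htnd
  have hlint_g : ∫⁻ x, ENNReal.ofReal (f 0 x - g x) ∂μ
      ≤ ENNReal.ofReal ((∫ x, f 0 x ∂μ) - B) := by
    rw [lintegral_congr_ae (Filter.EventuallyEq.symm hsup_eq),
      lintegral_iSup' hD_meas (Filter.Eventually.of_forall hD_mono)]
    exact iSup_le hD_lint
  have hdiff_int : Integrable (fun x => f 0 x - g x) μ := by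
    constructor
    · exact (hf_cont 0).aestronglyMeasurable.sub hg_meas
    · rw [hasFiniteIntegral_iff_ofReal]
      · exact lt_of_le_of_lt hlint_g ENNReal.ofReal_lt_top
      · filter_upwards [hae_ne] with x hx
        have := hg_le x hx 0
        simp only [Pi.zero_apply]
        linarith
  have hg_int : Integrable g μ := by
    have : g = (fun x => f 0 x - (f 0 x - g x)) := by ext x; ring
    rw [this]
    exact (hf_int 0).sub hdiff_int
  refine ⟨hg_int, ?_⟩
  apply tendsto_integral_of_dominated_convergence (fun x => |f 0 x| + |g x|)
    (fun n => (hf_cont n).aestronglyMeasurable)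
    ((hf_int 0).abs.add hg_int.abs)
  · intro n
    filter_upwards [hae_ne] with x hx
    rw [Real.norm_eq_abs, abs_le]
    have h1 := hg_le x hx n
    have h2 := hf_anti x 0 n (Nat.zero_le n)
    have h3 := le_abs_self (f 0 x)
    have h4 := le_abs_self (g x)
    have h5 := neg_abs_le (f 0 x)
    have h6 := neg_abs_le (g x)
    constructor <;> linarith
  · filter_upwards [hae_ne] with x hx
    exact hg_tendsto x hx

end Phi

end Stmt14

open Stmt14 in
/-- Concavity in u of
F(u,t) = −∫log λ dμ_D + ∫log|λ−u| dμ_t − u²/(2t), where μ_t = ρ_{sc,t} ⊞ μ_D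
is characterized as the compactly supported probability measure whose
Stieltjes transform m satisfies the Pastur relation
m(z) = ∫ dμ_D(λ)/(λ − z − t m(z)) on the upper half plane. -/
theorem stmt14 (μD μt : Measure ℝ) [IsProbabilityMeasure μD]
    [IsProbabilityMeasure μt] (a b : ℝ) (ha : 0 < a)
    (hsuppD : μD (Set.Icc a b)ᶜ = 0)
    (c d : ℝ) (hsuppt : μt (Set.Icc c d)ᶜ = 0)
    (t : ℝ) (ht : 0 < t)
    (hpastur : ∀ z : ℂ, 0 < z.im →
      (∫ x, ((x : ℂ) - z)⁻¹ ∂μt) =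
        ∫ x, ((x : ℂ) - z - t * ∫ y, ((y : ℂ) - z)⁻¹ ∂μt)⁻¹ ∂μD) :
    ConcaveOn ℝ Set.univ (fun u : ℝ =>
      -(∫ x, Real.log x ∂μD) + (∫ x, Real.log |x - u| ∂μt)
        - u ^ 2 / (2 * t)) := by
  classical
  set K : ℝ := Real.sqrt t⁻¹ with hK_def
  have hbounds := fun (z : ℂ) (hz : 0 < z.im) =>
    pastur_bounds hsuppD hsuppt ht hpastur hz
  have hzim : ∀ (u ε : ℝ), 0 < ε → (0 : ℝ) < ((u : ℂ) + ε * Complex.I).im := by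
    intro u ε hε; rw [z_im]; exact hε
  have hst_norm : ∀ (ε : ℝ), 0 < ε → ∀ u : ℝ, ‖st μt ((u : ℂ) + ε * Complex.I)‖ ≤ K :=
    fun ε hε u => (hbounds _ (hzim u ε hε)).1
  have hst_im : ∀ (u ε : ℝ), 0 < ε → (st μt ((u : ℂ) + ε * Complex.I)).im ≤ K := by
    intro u ε hε
    calc (st μt ((u : ℂ) + ε * Complex.I)).im
        ≤ |(st μt ((u : ℂ) + ε * Complex.I)).im| := le_abs_self _
      _ ≤ ‖st μt ((u : ℂ) + ε * Complex.I)‖ := by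
          exact Complex.abs_im_le_norm _
      _ ≤ K := hst_norm ε hε u
  have hatom : ∀ u : ℝ, μt {u} = 0 :=
    meas_singleton_eq_zero hsuppt hst_im
  -- lower bound on the regularized integrals
  have hlow : ∀ u : ℝ, ∀ n : ℕ,
      -(K * |u - (c - 1)|) ≤ ∫ x, Real.log ((x - u) ^ 2 + (1 / (n + 1 : ℝ)) ^ 2) / 2 ∂μt := by
    intro u n
    set ε : ℝ := 1 / (n + 1 : ℝ) with hε_def
    have hε : 0 < ε := eps_pos n
    have hphic : 0 ≤ ∫ x, Real.log ((x - (c - 1)) ^ 2 + ε ^ 2) / 2 ∂μt := by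
      apply integral_nonneg_of_ae
      filter_upwards [ae_mem_of_compl_null hsuppt] with x hx
      have hx1 : (1 : ℝ) ≤ x - (c - 1) := by
        have := hx.1
        linarith
      have harg : (1 : ℝ) ≤ (x - (c - 1)) ^ 2 + ε ^ 2 := by nlinarith
      have := Real.log_nonneg harg
      positivity
    have hlip := lipschitz_phi hsuppt hε (hst_norm ε hε) (c - 1) u
    have h1 : |(∫ x, Real.log ((x - u) ^ 2 + ε ^ 2) / 2 ∂μt) -
        (∫ x, Real.log ((x - (c - 1)) ^ 2 + ε ^ 2) / 2 ∂μt)| ≤ K * |u - (c - 1)| := hlip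
    have h2 := abs_le.1 h1
    linarith [h2.1]
  -- per-point convergence and integrability
  have hconv : ∀ u : ℝ,
      Filter.Tendsto (fun n : ℕ => ∫ x, Real.log ((x - u) ^ 2 + (1 / (n + 1 : ℝ)) ^ 2) / 2 ∂μt)
        Filter.atTop (nhds (∫ x, Real.log |x - u| ∂μt)) :=
    fun u => (integrable_and_tendsto hsuppt u (hatom u) (hlow u)).2
  -- concavity of the regularized functions
  have hGconc : ∀ n : ℕ, ConcaveOn ℝ Set.univ
      (fun u : ℝ => (∫ x, Real.log ((x - u) ^ 2 + (1 / (n + 1 : ℝ)) ^ 2) / 2 ∂μt)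
        - u ^ 2 / (2 * t)) := by
    intro n
    exact concave_phi hsuppt (eps_pos n) ht
      (fun u => (hbounds _ (hzim u _ (eps_pos n))).2)
  -- pass to the limit
  set C₀ : ℝ := ∫ x, Real.log x ∂μD with hC₀
  refine ⟨convex_univ, ?_⟩
  intro x _ y _ α β hα hβ hαβ
  set Ψ : ℝ → ℝ := fun v => (∫ x, Real.log |x - v| ∂μt) - v ^ 2 / (2 * t) with hΨ
  have hT : ∀ v : ℝ, Filter.Tendsto
      (fun n : ℕ => (∫ x, Real.log ((x - v) ^ 2 + (1 / (n + 1 : ℝ)) ^ 2) / 2 ∂μt)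
        - v ^ 2 / (2 * t)) Filter.atTop (nhds (Ψ v)) :=
    fun v => (hconv v).sub_const _
  have hkey : α * Ψ x + β * Ψ y ≤ Ψ (α * x + β * y) := by
    apply le_of_tendsto_of_tendsto' (((hT x).const_mul α).add ((hT y).const_mul β))
      (hT (α * x + β * y))
    intro n
    have hn := (hGconc n).2 (Set.mem_univ x) (Set.mem_univ y) hα hβ hαβ
    simpa [smul_eq_mul] using hn
  simp only [smul_eq_mul]
  have hx' : -C₀ + (∫ x_1, Real.log |x_1 - x| ∂μt) - x ^ 2 / (2 * t) = -C₀ + Ψ x := by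
    rw [hΨ]; ring
  have hy' : -C₀ + (∫ x_1, Real.log |x_1 - y| ∂μt) - y ^ 2 / (2 * t) = -C₀ + Ψ y := by
    rw [hΨ]; ring
  have hxy' : -C₀ + (∫ x_1, Real.log |x_1 - (α * x + β * y)| ∂μt)
      - (α * x + β * y) ^ 2 / (2 * t) = -C₀ + Ψ (α * x + β * y) := by
    rw [hΨ]; ring
  simp only [hx', hy', hxy']
  have : α * (-C₀ + Ψ x) + β * (-C₀ + Ψ y) = -C₀ + (α * Ψ x + β * Ψ y) := by
    linear_combination (-C₀) * hαβ
  rw [this]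
  linarith
end
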